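/- Let A be the ring of regular functions on U = X ∖ S, where X is a smooth projective geometrically integral curve of genus g over F_q of characteristic p and S is a finite nonempty set of closed points. Let E be the divisor (p+1)(2g+5)·Σ_{𝔭∈S} 𝔭. Then for every effective divisor D supported on S and every a ∈ L(D), one can write a = t₁a₁^p + ⋯ + t_m a_m^p with t_i ∈ L(E), a_i ∈ A, and t_i a_i^p ∈ L(D) for each i. -/

import Mathlib

/-- The degree of a divisor `D = Σ n_P · P` on a curve whose closed point `P` has residue
degree `dg P`. -/
def divisorDeg {Pt : Type*} (dg : Pt → ℕ) (D : Pt →₀ ℤ) : ℤ :=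
  D.sum fun P k => k * dg P

/-- The Riemann–Roch space `L(D) = {f ∈ K* : div(f) + D ≥ 0} ∪ {0}`, for a field `K` with
a family of additive valuations `ord P` indexed by closed points `P`. -/
def RRSpace {K Pt : Type*} [Zero K] (ord : Pt → K → ℤ) (D : Pt →₀ ℤ) : Set K :=
  {f | f = 0 ∨ ∀ P, -(D P) ≤ ord P f}

section Aux

variable {K Pt : Type*} [Field K] {ord : Pt → K → ℤ}

lemma aux_ord_one
    (hord_mul : ∀ P (f h : K), f ≠ 0 → h ≠ 0 → ord P (f * h) = ord P f + ord P h)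
    (P : Pt) : ord P (1:K) = 0 := by
  have := hord_mul P 1 1 one_ne_zero one_ne_zero
  simp at this; omega

lemma aux_ord_pow
    (hord_mul : ∀ P (f h : K), f ≠ 0 → h ≠ 0 → ord P (f * h) = ord P f + ord P h)
    (P : Pt) {f : K} (hf : f ≠ 0) (k : ℕ) : ord P (f ^ k) = k * ord P f := by
  induction k with
  | zero => simpa using aux_ord_one hord_mul P
  | succ k ih =>
      rw [pow_succ, hord_mul P _ f (pow_ne_zero _ hf) hf, ih]
      push_cast; ring

lemma aux_ord_neg {Fq : Type*} [Field Fq] [Algebra Fq K]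
    (hord_mul : ∀ P (f h : K), f ≠ 0 → h ≠ 0 → ord P (f * h) = ord P f + ord P h)
    (hord_const : ∀ P (c : Fq), c ≠ 0 → ord P (algebraMap Fq K c) = 0)
    (P : Pt) {f : K} (hf : f ≠ 0) : ord P (-f) = ord P f := by
  have h1 : (-f : K) = algebraMap Fq K (-1) * f := by simp
  rw [h1, hord_mul P _ f (by simp) hf, hord_const P (-1) (by norm_num), zero_add]

lemma RR_zero {D : Pt →₀ ℤ} : (0:K) ∈ RRSpace ord D := Or.inl rfl

lemma RR_mono {D D' : Pt →₀ ℤ} (h : ∀ P, D P ≤ D' P) :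
    RRSpace ord D ⊆ RRSpace ord D' := fun f hf =>
  hf.imp id (fun hf' P => le_trans (by linarith [h P]) (hf' P))

lemma RR_add
    (hord_add : ∀ P (f h : K), f ≠ 0 → h ≠ 0 → f + h ≠ 0 →
      min (ord P f) (ord P h) ≤ ord P (f + h))
    {D : Pt →₀ ℤ} {a b : K} (ha : a ∈ RRSpace ord D) (hb : b ∈ RRSpace ord D) :
    a + b ∈ RRSpace ord D := by
  rcases ha with rfl | ha
  · simpa using hb
  rcases hb with rfl | hb
  · rw [add_zero]; exact Or.inr ha
  by_cases hab : a + b = 0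
  · exact Or.inl hab
  rcases eq_or_ne a 0 with rfl | ha0
  · exact Or.inr (by simpa using hb)
  rcases eq_or_ne b 0 with rfl | hb0
  · exact Or.inr (by simpa using ha)
  exact Or.inr fun P => le_trans (le_min (ha P) (hb P)) (hord_add P a b ha0 hb0 hab)

lemma RR_neg {Fq : Type*} [Field Fq] [Algebra Fq K]
    (hord_mul : ∀ P (f h : K), f ≠ 0 → h ≠ 0 → ord P (f * h) = ord P f + ord P h)
    (hord_const : ∀ P (c : Fq), c ≠ 0 → ord P (algebraMap Fq K c) = 0)
    {D : Pt →₀ ℤ} {a : K} (ha : a ∈ RRSpace ord D) : -a ∈ RRSpace ord D := by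
  rcases eq_or_ne a 0 with rfl | ha0
  · simpa using RR_zero
  rcases ha with rfl | ha
  · simpa using RR_zero
  exact Or.inr fun P => (aux_ord_neg hord_mul hord_const P ha0).symm ▸ ha P

lemma RR_sub {Fq : Type*} [Field Fq] [Algebra Fq K]
    (hord_mul : ∀ P (f h : K), f ≠ 0 → h ≠ 0 → ord P (f * h) = ord P f + ord P h)
    (hord_add : ∀ P (f h : K), f ≠ 0 → h ≠ 0 → f + h ≠ 0 →
      min (ord P f) (ord P h) ≤ ord P (f + h))
    (hord_const : ∀ P (c : Fq), c ≠ 0 → ord P (algebraMap Fq K c) = 0)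
    {D : Pt →₀ ℤ} {a b : K} (ha : a ∈ RRSpace ord D) (hb : b ∈ RRSpace ord D) :
    a - b ∈ RRSpace ord D := by
  rw [sub_eq_add_neg]
  exact RR_add hord_add ha (RR_neg hord_mul hord_const hb)

end Aux

section Aux2

variable {K Pt Fq : Type*} [Field K] [Field Fq] [Fintype Fq] [Algebra Fq K]
  {ord : Pt → K → ℤ} {dg : Pt → ℕ} {g : ℕ}

lemma RR_finite
    (hRR : ∀ D : Pt →₀ ℤ, 2 * (g : ℤ) - 2 < divisorDeg dg D →
      (Nat.card (RRSpace ord D) : ℝ)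
        = (Fintype.card Fq : ℝ) ^ (divisorDeg dg D + 1 - (g : ℤ)))
    {D : Pt →₀ ℤ} (hdeg : 2 * (g : ℤ) - 2 < divisorDeg dg D) :
    (RRSpace ord D).Finite := by
  have h := hRR D hdeg
  have hq : (1:ℝ) < Fintype.card Fq := by exact_mod_cast Fintype.one_lt_card
  have hne : (RRSpace ord D).ncard ≠ 0 := by
    intro h0
    rw [← Nat.card_coe_set_eq] at h0
    rw [h0] at h
    have : (0:ℝ) < (Fintype.card Fq : ℝ) ^ (divisorDeg dg D + 1 - (g:ℤ)) :=
      zpow_pos (by linarith) _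
    simp at h
    linarith
  exact Set.finite_of_ncard_ne_zero hne

lemma divisorDeg_single (𝔭 : Pt) (n : ℤ) :
    divisorDeg dg (Finsupp.single 𝔭 n) = n * dg 𝔭 := by
  simp [divisorDeg, Finsupp.sum_single_index]

lemma divisorDeg_lower (hdg : ∀ P, 0 < dg P) {D : Pt →₀ ℤ} (hDeff : ∀ P, 0 ≤ D P) (𝔭 : Pt) :
    D 𝔭 * dg 𝔭 ≤ divisorDeg dg D := by
  classical
  by_cases h𝔭 : 𝔭 ∈ D.support
  · exact Finset.single_le_sum (f := fun P => D P * (dg P : ℤ))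
      (fun P _ => mul_nonneg (hDeff P) (by positivity)) h𝔭
  · have : D 𝔭 = 0 := Finsupp.notMem_support_iff.mp h𝔭
    rw [this, zero_mul]
    exact Finset.sum_nonneg fun P _ => mul_nonneg (hDeff P) (by positivity)

lemma divisorDeg_sub_single (𝔭 : Pt) (k : ℤ) (D : Pt →₀ ℤ) :
    divisorDeg dg (D - Finsupp.single 𝔭 k) = divisorDeg dg D - k * dg 𝔭 := by
  unfold divisorDeg
  rw [Finsupp.sum_sub_index (fun a b₁ b₂ => by ring)]
  rw [Finsupp.sum_single_index (by ring)]

lemma exists_exact_order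
    (hdg : ∀ P, 0 < dg P)
    (hRR : ∀ D : Pt →₀ ℤ, 2 * (g : ℤ) - 2 < divisorDeg dg D →
      (Nat.card (RRSpace ord D) : ℝ)
        = (Fintype.card Fq : ℝ) ^ (divisorDeg dg D + 1 - (g : ℤ)))
    (𝔭 : Pt) (n : ℤ) (hn : 2 * (g:ℤ) + 2 ≤ n) :
    ∃ f : K, f ≠ 0 ∧ ord 𝔭 f = -n ∧ ∀ Q, Q ≠ 𝔭 → 0 ≤ ord Q f := by
  have hdg𝔭 : (1:ℤ) ≤ dg 𝔭 := by exact_mod_cast hdg 𝔭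
  have hq : (1:ℝ) < Fintype.card Fq := by exact_mod_cast Fintype.one_lt_card
  have hdeg1 : 2 * (g:ℤ) - 2 < divisorDeg dg (Finsupp.single 𝔭 n) := by
    rw [divisorDeg_single]
    nlinarith
  have hdeg0 : 2 * (g:ℤ) - 2 < divisorDeg dg (Finsupp.single 𝔭 (n-1)) := by
    rw [divisorDeg_single]
    nlinarith
  have hc1 := hRR _ hdeg1
  have hc0 := hRR _ hdeg0
  have hlt : (RRSpace ord (Finsupp.single 𝔭 (n-1))).ncard
      < (RRSpace ord (Finsupp.single 𝔭 n)).ncard := by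
    have : (Fintype.card Fq : ℝ) ^ (divisorDeg dg (Finsupp.single 𝔭 (n-1)) + 1 - (g:ℤ))
        < (Fintype.card Fq : ℝ) ^ (divisorDeg dg (Finsupp.single 𝔭 n) + 1 - (g:ℤ)) := by
      apply zpow_lt_zpow_right₀ hq
      rw [divisorDeg_single, divisorDeg_single]
      nlinarith
    rw [← hc0, ← hc1] at this
    rw [← Nat.card_coe_set_eq, ← Nat.card_coe_set_eq]
    exact_mod_cast this
  have hfin1 : (RRSpace ord (Finsupp.single 𝔭 n)).Finite := RR_finite hRR hdeg1
  have hex : ∃ f, f ∈ RRSpace ord (Finsupp.single 𝔭 n)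
      ∧ f ∉ RRSpace ord (Finsupp.single 𝔭 (n-1)) := by
    by_contra hcon
    push_neg at hcon
    have hsub : RRSpace ord (Finsupp.single 𝔭 n) ⊆ RRSpace ord (Finsupp.single 𝔭 (n-1)) :=
      fun f hf => hcon f hf
    have := Set.ncard_le_ncard hsub (RR_finite hRR hdeg0)
    omega
  obtain ⟨f, hf1, hf0⟩ := hex
  have hfne : f ≠ 0 := by rintro rfl; exact hf0 (Or.inl rfl)
  rcases hf1 with rfl | hf1
  · exact absurd rfl hfne
  refine ⟨f, hfne, ?_, ?_⟩
  · have hnot : ¬ ∀ P, -(Finsupp.single 𝔭 (n-1) P) ≤ ord P f := fun h => hf0 (Or.inr h)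
    push_neg at hnot
    obtain ⟨P, hP⟩ := hnot
    have h1 := hf1 P
    by_cases hPe : P = 𝔭
    · subst hPe
      rw [Finsupp.single_eq_same] at hP h1
      omega
    · exfalso
      rw [Finsupp.single_eq_of_ne' (fun h => hPe h.symm)] at hP
      rw [Finsupp.single_eq_of_ne' (fun h => hPe h.symm)] at h1
      omega
  · intro Q hQ
    have := hf1 Q
    rw [Finsupp.single_eq_of_ne' (fun h => hQ h.symm)] at this
    simpa using this

lemma reduce_step (p : ℕ)
    (hord_mul : ∀ P (f h : K), f ≠ 0 → h ≠ 0 → ord P (f * h) = ord P f + ord P h)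
    (hord_add : ∀ P (f h : K), f ≠ 0 → h ≠ 0 → f + h ≠ 0 →
      min (ord P f) (ord P h) ≤ ord P (f + h))
    (hord_const : ∀ P (c : Fq), c ≠ 0 → ord P (algebraMap Fq K c) = 0)
    (hdg : ∀ P, 0 < dg P)
    (hRR : ∀ D : Pt →₀ ℤ, 2 * (g : ℤ) - 2 < divisorDeg dg D →
      (Nat.card (RRSpace ord D) : ℝ)
        = (Fintype.card Fq : ℝ) ^ (divisorDeg dg D + 1 - (g : ℤ)))
    {D : Pt →₀ ℤ} (hDeff : ∀ P, 0 ≤ D P)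
    (𝔭 : Pt) (i j : ℤ)
    (hi : 2 * (g:ℤ) + 2 ≤ i) (hj : 2 * (g:ℤ) + 2 ≤ j)
    (hn : D 𝔭 = i + p * j)
    {f : K} (hf0 : f ≠ 0) (hford : ord 𝔭 f = -j) (hfreg : ∀ Q, Q ≠ 𝔭 → 0 ≤ ord Q f)
    {a : K} (ha : a ∈ RRSpace ord D) :
    ∃ t ∈ RRSpace ord (Finsupp.single 𝔭 i),
      a - t * f ^ p ∈ RRSpace ord (D - Finsupp.single 𝔭 1) := by
  classical
  have hg0 : (0:ℤ) ≤ g := Int.ofNat_nonneg g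
  have hdg𝔭 : (1:ℤ) ≤ dg 𝔭 := by exact_mod_cast hdg 𝔭
  have hp0 : (0:ℤ) ≤ (p:ℤ) := Int.ofNat_nonneg p
  have hpj : (0:ℤ) ≤ (p:ℤ) * j := mul_nonneg hp0 (by linarith)
  set z := f ^ p with hzdef
  have hz : z ≠ 0 := pow_ne_zero _ hf0
  have hzord : ∀ P, ord P z = p * ord P f := fun P => aux_ord_pow hord_mul P hf0 p
  set D' := D - Finsupp.single 𝔭 1 with hD'def
  have hD'app : ∀ P, D' P = D P - Finsupp.single 𝔭 1 P := fun P => Finsupp.sub_apply _ _ _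
  have hD'𝔭 : D' 𝔭 = D 𝔭 - 1 := by rw [hD'app, Finsupp.single_eq_same]
  have hD'Q : ∀ Q, Q ≠ 𝔭 → D' Q = D Q := by
    intro Q hQ
    rw [hD'app, Finsupp.single_eq_of_ne' (fun h => hQ h.symm), sub_zero]
  have hD'eff : ∀ P, 0 ≤ D' P := by
    intro P
    by_cases hP : P = 𝔭
    · subst hP; rw [hD'𝔭]; omega
    · rw [hD'Q P hP]; exact hDeff P
  -- degrees
  have hlow : D 𝔭 * dg 𝔭 ≤ divisorDeg dg D := divisorDeg_lower hdg hDeff 𝔭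
  have hdegD : 2 * (g:ℤ) - 2 < divisorDeg dg D := by nlinarith
  have hdegD'eq : divisorDeg dg D' = divisorDeg dg D - dg 𝔭 := by
    rw [hD'def, divisorDeg_sub_single]; ring
  have hdegD' : 2 * (g:ℤ) - 2 < divisorDeg dg D' := by
    rw [hdegD'eq]; nlinarith
  have hdegT : 2 * (g:ℤ) - 2 < divisorDeg dg (Finsupp.single 𝔭 i) := by
    rw [divisorDeg_single]; nlinarith
  have hdegSm : 2 * (g:ℤ) - 2 < divisorDeg dg (Finsupp.single 𝔭 (i-1)) := by
    rw [divisorDeg_single]; nlinarith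
  -- finiteness
  have hTfin := RR_finite hRR hdegT
  have hSmfin := RR_finite hRR hdegSm
  have hBigfin := RR_finite hRR hdegD
  have hB'fin := RR_finite hRR hdegD'
  set TT := hTfin.toFinset with hTT
  set SmF := hSmfin.toFinset with hSmF
  set BigF := hBigfin.toFinset with hBigF
  set BB' := hB'fin.toFinset with hBB'
  -- membership lemmas
  have hSmT : RRSpace ord (Finsupp.single 𝔭 (i-1)) ⊆ RRSpace ord (Finsupp.single 𝔭 i) := by
    apply RR_mono
    intro P
    by_cases hP : P = 𝔭
    · subst hP; rw [Finsupp.single_eq_same, Finsupp.single_eq_same]; omega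
    · rw [Finsupp.single_eq_of_ne' (fun h => hP h.symm),
        Finsupp.single_eq_of_ne' (fun h => hP h.symm)]
  have hD'D : RRSpace ord D' ⊆ RRSpace ord D := by
    apply RR_mono
    intro P
    by_cases hP : P = 𝔭
    · subst hP; omega
    · rw [hD'Q P hP]
  have hM1 : ∀ t ∈ RRSpace ord (Finsupp.single 𝔭 i), t * z ∈ RRSpace ord D := by
    intro t ht
    rcases eq_or_ne t 0 with rfl | ht0
    · simpa using RR_zero
    rcases ht with rfl | ht
    · exact absurd rfl ht0
    refine Or.inr fun P => ?_
    rw [hord_mul P t z ht0 hz, hzord]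
    by_cases hP : P = 𝔭
    · subst hP
      have h1 := ht P
      rw [Finsupp.single_eq_same] at h1
      rw [hford, hn]
      have : (p:ℤ) * -j = -((p:ℤ)*j) := by ring
      rw [this]
      omega
    · have h1 := ht P
      rw [Finsupp.single_eq_of_ne' (fun h => hP h.symm)] at h1
      have h2 : 0 ≤ ord P f := hfreg P hP
      have h3 : 0 ≤ (p:ℤ) * ord P f := mul_nonneg hp0 h2
      have := hDeff P
      omega
  have hM2 : ∀ s ∈ RRSpace ord (Finsupp.single 𝔭 (i-1)), s * z ∈ RRSpace ord D' := by
    intro s hs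
    rcases eq_or_ne s 0 with rfl | hs0
    · simpa using RR_zero
    rcases hs with rfl | hs
    · exact absurd rfl hs0
    refine Or.inr fun P => ?_
    rw [hord_mul P s z hs0 hz, hzord]
    by_cases hP : P = 𝔭
    · subst hP
      have h1 := hs P
      rw [Finsupp.single_eq_same] at h1
      rw [hford, hD'𝔭, hn]
      have : (p:ℤ) * -j = -((p:ℤ)*j) := by ring
      rw [this]
      omega
    · have h1 := hs P
      rw [Finsupp.single_eq_of_ne' (fun h => hP h.symm)] at h1
      have h2 : 0 ≤ ord P f := hfreg P hP
      have h3 : 0 ≤ (p:ℤ) * ord P f := mul_nonneg hp0 h2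
      have h4 := hD'eff P
      omega
  have hM3 : ∀ t ∈ RRSpace ord (Finsupp.single 𝔭 i), t * z ∈ RRSpace ord D' →
      t ∈ RRSpace ord (Finsupp.single 𝔭 (i-1)) := by
    intro t ht htz
    rcases eq_or_ne t 0 with rfl | ht0
    · exact Or.inl rfl
    rcases htz with h0 | htz
    · exact absurd h0 (mul_ne_zero ht0 hz)
    rcases ht with rfl | ht
    · exact absurd rfl ht0
    refine Or.inr fun P => ?_
    by_cases hP : P = 𝔭
    · subst hP
      have h1 := htz P
      rw [hord_mul _ _ _ ht0 hz, hzord, hford, hD'𝔭, hn] at h1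
      rw [Finsupp.single_eq_same]
      have : (p:ℤ) * -j = -((p:ℤ)*j) := by ring
      rw [this] at h1
      omega
    · have h1 := ht P
      rw [Finsupp.single_eq_of_ne' (fun h => hP h.symm)] at h1 ⊢
      exact h1
  -- cardinality identity
  have hq1 : (1:ℝ) < Fintype.card Fq := by exact_mod_cast Fintype.one_lt_card
  have hq0 : (Fintype.card Fq : ℝ) ≠ 0 := by linarith
  have hcard : TT.card * BB'.card = BigF.card * SmF.card := by
    have e1 := hRR _ hdegT
    have e2 := hRR _ hdegD'
    have e3 := hRR D hdegD
    have e4 := hRR _ hdegSm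
    have hT' : (TT.card : ℝ) = (Nat.card (RRSpace ord (Finsupp.single 𝔭 i)) : ℝ) := by
      rw [Nat.card_coe_set_eq, Set.ncard_eq_toFinset_card _ hTfin]
    have hB'' : (BB'.card : ℝ) = (Nat.card (RRSpace ord D') : ℝ) := by
      rw [Nat.card_coe_set_eq, Set.ncard_eq_toFinset_card _ hB'fin]
    have hBig' : (BigF.card : ℝ) = (Nat.card (RRSpace ord D) : ℝ) := by
      rw [Nat.card_coe_set_eq, Set.ncard_eq_toFinset_card _ hBigfin]
    have hSm' : (SmF.card : ℝ) = (Nat.card (RRSpace ord (Finsupp.single 𝔭 (i-1))) : ℝ) := by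
      rw [Nat.card_coe_set_eq, Set.ncard_eq_toFinset_card _ hSmfin]
    have : (TT.card : ℝ) * BB'.card = (BigF.card : ℝ) * SmF.card := by
      rw [hT', hB'', hBig', hSm', e1, e2, e3, e4, ← zpow_add₀ hq0, ← zpow_add₀ hq0]
      congr 1
      rw [hdegD'eq, divisorDeg_single, divisorDeg_single]
      ring
    exact_mod_cast this
  -- the image
  set Φ : K × K → K := fun tb => tb.1 * z + tb.2 with hΦdef
  set I := (TT ×ˢ BB').image Φ with hIdef
  have hIsub : I ⊆ BigF := by
    intro y hy
    rcases Finset.mem_image.mp hy with ⟨tb, htb, rfl⟩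
    rcases Finset.mem_product.mp htb with ⟨ht, hb⟩
    rw [hTT, Set.Finite.mem_toFinset] at ht
    rw [hBB', Set.Finite.mem_toFinset] at hb
    rw [hBigF, Set.Finite.mem_toFinset]
    exact RR_add hord_add (hM1 _ ht) (hD'D hb)
  -- choose representatives
  have hrepex : ∀ y : K, ∃ tb : K × K, y ∈ I →
      tb.1 ∈ RRSpace ord (Finsupp.single 𝔭 i) ∧ tb.2 ∈ RRSpace ord D' ∧ tb.1 * z + tb.2 = y := by
    intro y
    by_cases hy : y ∈ I
    · rcases Finset.mem_image.mp hy with ⟨tb, htb, he⟩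
      rcases Finset.mem_product.mp htb with ⟨ht, hb⟩
      rw [hTT, Set.Finite.mem_toFinset] at ht
      rw [hBB', Set.Finite.mem_toFinset] at hb
      exact ⟨tb, fun _ => ⟨ht, hb, he⟩⟩
    · exact ⟨(0,0), fun h => absurd h hy⟩
  choose rep hrep using hrepex
  -- the bijection
  have hbij : (I ×ˢ SmF).card = (TT ×ˢ BB').card := by
    apply Finset.card_nbij'
      (i := fun ys => ((rep ys.1).1 + ys.2, (rep ys.1).2 - ys.2 * z))
      (j := fun tb => (Φ tb, tb.1 - (rep (Φ tb)).1))
    · rintro ⟨y, s⟩ hys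
      rcases Finset.mem_product.mp hys with ⟨hyI, hsS⟩
      obtain ⟨hr1, hr2, hr3⟩ := hrep y hyI
      rw [hSmF, Set.Finite.mem_toFinset] at hsS
      rw [Finset.mem_coe, Finset.mem_product]
      constructor
      · rw [hTT, Set.Finite.mem_toFinset]
        exact RR_add hord_add hr1 (hSmT hsS)
      · rw [hBB', Set.Finite.mem_toFinset]
        exact RR_sub hord_mul hord_add hord_const hr2 (hM2 _ hsS)
    · rintro ⟨t, b⟩ htb
      rcases Finset.mem_product.mp htb with ⟨htT, hbB⟩
      have hyI : Φ (t, b) ∈ I := Finset.mem_image_of_mem Φ htb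
      obtain ⟨hr1, hr2, hr3⟩ := hrep _ hyI
      rw [hTT, Set.Finite.mem_toFinset] at htT
      rw [hBB', Set.Finite.mem_toFinset] at hbB
      rw [Finset.mem_coe, Finset.mem_product]
      refine ⟨hyI, ?_⟩
      rw [hSmF, Set.Finite.mem_toFinset]
      apply hM3 _ (RR_sub hord_mul hord_add hord_const htT hr1)
      have h := hr3
      simp only [hΦdef] at h
      have halg : (t - (rep (Φ (t,b))).1) * z = (rep (Φ (t,b))).2 - b := by
        linear_combination -h
      rw [halg]
      exact RR_sub hord_mul hord_add hord_const hr2 hbB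
    · rintro ⟨y, s⟩ hys
      rcases Finset.mem_product.mp hys with ⟨hyI, hsS⟩
      obtain ⟨hr1, hr2, hr3⟩ := hrep y hyI
      have hy : Φ ((rep y).1 + s, (rep y).2 - s * z) = y := by
        simp only [hΦdef]; linear_combination hr3
      simp only [hy]
      rw [Prod.mk.injEq]
      exact ⟨rfl, by ring⟩
    · rintro ⟨t, b⟩ htb
      have hyI : Φ (t, b) ∈ I := Finset.mem_image_of_mem Φ htb
      obtain ⟨hr1, hr2, hr3⟩ := hrep _ hyI
      have h := hr3
      simp only [hΦdef] at h
      rw [Prod.mk.injEq]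
      constructor
      · simp only [hΦdef]; ring
      · linear_combination h
  -- conclude
  have hSm0 : (0:K) ∈ SmF := by rw [hSmF, Set.Finite.mem_toFinset]; exact RR_zero
  have hSmpos : 0 < SmF.card := Finset.card_pos.mpr ⟨0, hSm0⟩
  rw [Finset.card_product, Finset.card_product] at hbij
  have hIcard : I.card = BigF.card := by
    have : I.card * SmF.card = BigF.card * SmF.card := by rw [hbij, hcard]
    exact Nat.eq_of_mul_eq_mul_right hSmpos this
  have hIeq : I = BigF := Finset.eq_of_subset_of_card_le hIsub (le_of_eq hIcard.symm)
  have haB : a ∈ BigF := by rw [hBigF, Set.Finite.mem_toFinset]; exact ha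
  rw [← hIeq] at haB
  rcases Finset.mem_image.mp haB with ⟨⟨t, b⟩, htb, he⟩
  rcases Finset.mem_product.mp htb with ⟨htT, hbB⟩
  rw [hTT, Set.Finite.mem_toFinset] at htT
  rw [hBB', Set.Finite.mem_toFinset] at hbB
  refine ⟨t, htT, ?_⟩
  simp only [hΦdef] at he
  have : a - t * f ^ p = b := by rw [← hzdef]; linear_combination -he
  rw [this]
  exact hbB

end Aux2


/-- Model of a smooth projective geometrically integral curve of genus `g` over `F_q` of
characteristic `p`: a function field `K/F_q` with closed points `Pt`, valuations `ord`,
residue degrees `dg`, satisfying Riemann–Roch.  Let `S` be a finite nonempty set of closed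
points, let `A = {f : ord_P f ≥ 0 for all P ∉ S}` be the ring of functions regular off
`S`, and let `E = (p+1)(2g+5)·Σ_{𝔭∈S} 𝔭`.  Then every `a ∈ L(D)`, for `D` effective and
supported on `S`, can be written `a = t₁a₁^p + ⋯ + t_m a_m^p` with `tᵢ ∈ L(E)`, `aᵢ ∈ A`
and `tᵢaᵢ^p ∈ L(D)`. -/
theorem pth_power_decomposition_in_RRSpace (p : ℕ) [Fact p.Prime]
    (Fq K : Type*) [Field Fq] [Fintype Fq] [Field K] [Algebra Fq K]
    [CharP K p]
    (Pt : Type*) (ord : Pt → K → ℤ) (dg : Pt → ℕ) (g : ℕ)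
    (hord_mul : ∀ P (f h : K), f ≠ 0 → h ≠ 0 → ord P (f * h) = ord P f + ord P h)
    (hord_add : ∀ P (f h : K), f ≠ 0 → h ≠ 0 → f + h ≠ 0 →
      min (ord P f) (ord P h) ≤ ord P (f + h))
    (hord_const : ∀ P (c : Fq), c ≠ 0 → ord P (algebraMap Fq K c) = 0)
    (hfin : ∀ f : K, f ≠ 0 → {P | ord P f ≠ 0}.Finite)
    (hdg : ∀ P, 0 < dg P)
    (hRR : ∀ D : Pt →₀ ℤ, 2 * (g : ℤ) - 2 < divisorDeg dg D →
      (Nat.card (RRSpace ord D) : ℝ)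
        = (Fintype.card Fq : ℝ) ^ (divisorDeg dg D + 1 - (g : ℤ)))
    (S : Finset Pt) (hS : S.Nonempty)
    (D : Pt →₀ ℤ) (hDeff : ∀ P, 0 ≤ D P) (hDsupp : ↑D.support ⊆ (S : Set Pt))
    (a : K) (ha : a ∈ RRSpace ord D) :
    ∃ (m : ℕ) (t w : Fin m → K),
      (∀ i, t i ∈ RRSpace ord (∑ 𝔭 ∈ S, Finsupp.single 𝔭 (((p : ℤ) + 1) * (2 * g + 5)))) ∧
      (∀ i, w i = 0 ∨ ∀ P, P ∉ S → 0 ≤ ord P (w i)) ∧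
      (∀ i, t i * (w i) ^ p ∈ RRSpace ord D) ∧
      a = ∑ i, t i * (w i) ^ p := by
  classical
  have hp2 : 2 ≤ p := (Fact.out : p.Prime).two_le
  have hp0 : (0:ℤ) < (p:ℤ) := by exact_mod_cast Nat.lt_of_lt_of_le Nat.zero_lt_two hp2
  set C : ℤ := ((p : ℤ) + 1) * (2 * g + 5) with hCdef
  have hg0 : (0:ℤ) ≤ (g:ℤ) := Int.ofNat_nonneg g
  have hC1 : 1 ≤ C := by nlinarith
  set E : Pt →₀ ℤ := ∑ 𝔭 ∈ S, Finsupp.single 𝔭 C with hEdef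
  have hEapp : ∀ P, E P = if P ∈ S then C else 0 := by
    intro P
    rw [hEdef, Finset.sum_apply']
    simp only [Finsupp.single_apply]
    rw [Finset.sum_ite_eq' S P (fun _ => C)]
  have key : ∀ (N : ℕ) (D : Pt →₀ ℤ), (∀ P, 0 ≤ D P) → ↑D.support ⊆ (S : Set Pt) →
      (D.sum fun _ k => k) ≤ (N:ℤ) → ∀ a ∈ RRSpace ord D,
      ∃ (m : ℕ) (t w : Fin m → K),
        (∀ i, t i ∈ RRSpace ord E) ∧
        (∀ i, w i = 0 ∨ ∀ P, P ∉ S → 0 ≤ ord P (w i)) ∧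
        (∀ i, t i * (w i) ^ p ∈ RRSpace ord D) ∧
        a = ∑ i, t i * (w i) ^ p := by
    intro N
    induction N with
    | zero =>
        intro D hDeff hDsupp hsum a ha
        -- show all coefficients are ≤ C (in fact D = 0), base case
        have hsmall : ∀ 𝔭, D 𝔭 ≤ C := by
          intro 𝔭
          by_cases h𝔭 : 𝔭 ∈ D.support
          · have := Finset.single_le_sum (f := fun P => D P) (fun P _ => hDeff P) h𝔭
            have h0 : (D.sum fun _ k => k) = ∑ P ∈ D.support, D P := rfl
            push_cast at hsum
            linarith
          · have : D 𝔭 = 0 := Finsupp.notMem_support_iff.mp h𝔭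
            omega
        have hDE : ∀ P, D P ≤ E P := by
          intro P
          rw [hEapp]
          split_ifs with hPS
          · exact hsmall P
          · have : P ∉ D.support := fun h => hPS (hDsupp h)
            have := Finsupp.notMem_support_iff.mp this
            omega
        refine ⟨1, fun _ => a, fun _ => 1, ?_, ?_, ?_, ?_⟩
        · intro _; exact RR_mono hDE ha
        · intro _; right; intro P _; rw [aux_ord_one hord_mul]
        · intro _; simpa using ha
        · simp
    | succ N ih =>
        intro D hDeff hDsupp hsum a ha
        by_cases hbig : ∃ 𝔭, C < D 𝔭
        · obtain ⟨𝔭, h𝔭⟩ := hbig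
          have h𝔭S : 𝔭 ∈ S := by
            have h1 : 𝔭 ∈ D.support := Finsupp.mem_support_iff.mpr (by omega)
            exact hDsupp h1
          set r : ℤ := (D 𝔭 - (2*(g:ℤ)+4)) % (p:ℤ) with hrdef
          have hr0 : 0 ≤ r := Int.emod_nonneg _ (ne_of_gt hp0)
          have hrp : r < (p:ℤ) := Int.emod_lt_of_pos _ hp0
          set i : ℤ := 2*(g:ℤ)+4 + r with hidef
          set j : ℤ := (D 𝔭 - (2*(g:ℤ)+4)) / (p:ℤ) with hjdef
          have hdm := Int.mul_ediv_add_emod (D 𝔭 - (2*(g:ℤ)+4)) (p:ℤ)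
          have hij : D 𝔭 = i + (p:ℤ) * j := by
            rw [hidef, hjdef, hrdef] at *
            linarith
          have hi : 2*(g:ℤ)+2 ≤ i := by omega
          have hjlow : (p:ℤ)*(2*(g:ℤ)+4) + 3 ≤ (p:ℤ) * j := by nlinarith
          have hj : 2*(g:ℤ)+2 ≤ j := by nlinarith
          obtain ⟨f, hf0, hford, hfreg⟩ := exists_exact_order hdg hRR 𝔭 j hj
          obtain ⟨t, htT, htres⟩ :=
            reduce_step p hord_mul hord_add hord_const hdg hRR hDeff 𝔭 i j hi hj hij
              hf0 hford hfreg ha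
          set D' := D - Finsupp.single 𝔭 1 with hD'def
          have hD'app : ∀ P, D' P = D P - Finsupp.single 𝔭 1 P :=
            fun P => Finsupp.sub_apply _ _ _
          have hD'eff : ∀ P, 0 ≤ D' P := by
            intro P
            rw [hD'app, Finsupp.single_apply]
            split_ifs with h
            · subst h; omega
            · have := hDeff P; omega
          have hD'supp : ↑D'.support ⊆ (S : Set Pt) := by
            intro P hP
            simp only [Finset.coe_subset, Finset.mem_coe] at *
            have h1 : D'.support ⊆ D.support ∪ (Finsupp.single 𝔭 (1:ℤ)).support :=
              Finsupp.support_sub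
            rcases Finset.mem_union.mp (h1 hP) with h | h
            · exact hDsupp h
            · have := Finsupp.support_single_subset h
              simp at this
              subst this
              exact h𝔭S
          have hD'sum : (D'.sum fun _ k => k) ≤ (N:ℤ) := by
            have h1 : (D'.sum fun _ k => k)
                = (D.sum fun _ k => k) - ((Finsupp.single 𝔭 1).sum fun _ k => k) := by
              rw [hD'def]
              exact Finsupp.sum_sub_index (fun a b₁ b₂ => rfl)
            have h2 : ((Finsupp.single 𝔭 (1:ℤ)).sum fun _ k => k) = 1 :=
              Finsupp.sum_single_index rfl
            rw [h1, h2]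
            push_cast at hsum ⊢
            omega
          have hD'D : RRSpace ord D' ⊆ RRSpace ord D := by
            apply RR_mono
            intro P
            rw [hD'app, Finsupp.single_apply]
            split_ifs <;> omega
          obtain ⟨m, t', w', h1, h2, h3, h4⟩ :=
            ih D' hD'eff hD'supp hD'sum (a - t * f ^ p) htres
          refine ⟨m + 1, Fin.cons t t', Fin.cons f w', ?_, ?_, ?_, ?_⟩
          · intro i0
            refine Fin.cases ?_ (fun k => ?_) i0
            · rw [Fin.cons_zero]
              apply RR_mono (D := Finsupp.single 𝔭 i) _ htT
              intro P
              rw [hEapp, Finsupp.single_apply]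
              split_ifs with hP hPS hPS
              · subst hP; nlinarith
              · exact absurd h𝔭S (hP ▸ hPS)
              · omega
              · omega
            · rw [Fin.cons_succ]; exact h1 k
          · intro i0
            refine Fin.cases ?_ (fun k => ?_) i0
            · rw [Fin.cons_zero]
              exact Or.inr fun P hPS => hfreg P (fun h => hPS (h ▸ h𝔭S))
            · rw [Fin.cons_succ]; exact h2 k
          · intro i0
            refine Fin.cases ?_ (fun k => ?_) i0
            · rw [Fin.cons_zero, Fin.cons_zero]
              have heq : t * f ^ p = a - (a - t * f ^ p) := by ring
              rw [heq]
              exact RR_sub hord_mul hord_add hord_const ha (hD'D htres)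
            · rw [Fin.cons_succ, Fin.cons_succ]
              exact hD'D (h3 k)
          · rw [Fin.sum_univ_succ]
            simp only [Fin.cons_zero, Fin.cons_succ]
            rw [← h4]
            ring
        · -- no big coefficient: same base-case argument
          push_neg at hbig
          have hDE : ∀ P, D P ≤ E P := by
            intro P
            rw [hEapp]
            split_ifs with hPS
            · exact hbig P
            · have : P ∉ D.support := fun h => hPS (hDsupp h)
              have := Finsupp.notMem_support_iff.mp this
              omega
          refine ⟨1, fun _ => a, fun _ => 1, ?_, ?_, ?_, ?_⟩
          · intro _; exact RR_mono hDE ha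
          · intro _; right; intro P _; rw [aux_ord_one hord_mul]
          · intro _; simpa using ha
          · simp
  -- apply key
  have hsumnonneg : 0 ≤ (D.sum fun _ k => k) :=
    Finset.sum_nonneg fun P _ => hDeff P
  obtain ⟨N, hN⟩ : ∃ N : ℕ, (D.sum fun _ k => k) ≤ (N:ℤ) :=
    ⟨(D.sum fun _ k => k).toNat, by omega⟩
  exact key N D hDeff hDsupp hN a ha
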